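/- arXiv:math/0610248 — 3 statements merged into one kernel-verified Lean document; each statement's English description precedes it below -/
import Mathlib

section
/- The function θ₀(r) = (1 - 4r²·ln r - r⁴)/(2·r^{1/2}·(1+r²)) satisfies 𝓛θ₀ = 0 for all r > 0, where 𝓛 = -d²/dr² + 3/(4r²) - 8/(1+r²)². -/
noncomputable def gfun : ℝ → ℝ := fun x =>
  (1 - 4 * x ^ 2 * Real.log x - x ^ 4) / (2 * Real.sqrt x * (1 + x ^ 2))

noncomputable def g1fun : ℝ → ℝ := fun x =>
  (4 * x ^ 4 * Real.log x - 12 * x ^ 2 * Real.log x - 3 * x ^ 6 - 15 * x ^ 4 - 13 * x ^ 2 - 1) /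
    (4 * Real.sqrt x * x * (1 + x ^ 2) ^ 2)

noncomputable def g2fun : ℝ → ℝ := fun x =>
  (-24 * x ^ 6 * Real.log x + 208 * x ^ 4 * Real.log x - 24 * x ^ 2 * Real.log x
      - 6 * x ^ 8 + 52 * x ^ 6 - 52 * x ^ 2 + 6) /
    (16 * Real.sqrt x * x ^ 2 * (1 + x ^ 2) ^ 3)

lemma hA (s : ℝ) (hs : 0 < s) : HasDerivAt gfun (g1fun (s ^ 2)) (s ^ 2) := by
  have hx : (0 : ℝ) < s ^ 2 := by positivity
  have hsq : Real.sqrt (s ^ 2) = s := Real.sqrt_sq hs.le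
  have hsrt : HasDerivAt Real.sqrt (1 / (2 * Real.sqrt (s ^ 2))) (s ^ 2) :=
    Real.hasDerivAt_sqrt hx.ne'
  have hlog : HasDerivAt Real.log ((s ^ 2)⁻¹) (s ^ 2) := Real.hasDerivAt_log hx.ne'
  have hN : HasDerivAt (fun x : ℝ => 1 - 4 * x ^ 2 * Real.log x - x ^ 4)
      (0 - ((4 * (↑2 * (s ^ 2) ^ 1)) * Real.log (s ^ 2) + (4 * (s ^ 2) ^ 2) * (s ^ 2)⁻¹)
        - ↑4 * (s ^ 2) ^ 3) (s ^ 2) :=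
    ((hasDerivAt_const _ (1 : ℝ)).sub (((hasDerivAt_pow 2 _).const_mul 4).mul hlog)).sub
      (hasDerivAt_pow 4 _)
  have hD : HasDerivAt (fun x : ℝ => 2 * Real.sqrt x * (1 + x ^ 2))
      ((2 * (1 / (2 * Real.sqrt (s ^ 2)))) * (1 + (s ^ 2) ^ 2)
        + (2 * Real.sqrt (s ^ 2)) * (0 + ↑2 * (s ^ 2) ^ 1)) (s ^ 2) :=
    (hsrt.const_mul 2).mul ((hasDerivAt_const _ (1 : ℝ)).add (hasDerivAt_pow 2 _))
  have hne : 2 * Real.sqrt (s ^ 2) * (1 + (s ^ 2) ^ 2) ≠ 0 := by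
    rw [hsq]; positivity
  have hQ := hN.div hD hne
  refine hQ.congr_deriv ?_
  simp only [g1fun, hsq]
  have h1 : s ≠ 0 := hs.ne'
  have h2 : (1 : ℝ) + (s ^ 2) ^ 2 ≠ 0 := by positivity
  field_simp
  ring

lemma hB (s : ℝ) (hs : 0 < s) : HasDerivAt g1fun (g2fun (s ^ 2)) (s ^ 2) := by
  have hx : (0 : ℝ) < s ^ 2 := by positivity
  have hsq : Real.sqrt (s ^ 2) = s := Real.sqrt_sq hs.le
  have hsrt : HasDerivAt Real.sqrt (1 / (2 * Real.sqrt (s ^ 2))) (s ^ 2) :=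
    Real.hasDerivAt_sqrt hx.ne'
  have hlog : HasDerivAt Real.log ((s ^ 2)⁻¹) (s ^ 2) := Real.hasDerivAt_log hx.ne'
  have hP : HasDerivAt (fun x : ℝ =>
        4 * x ^ 4 * Real.log x - 12 * x ^ 2 * Real.log x - 3 * x ^ 6 - 15 * x ^ 4 - 13 * x ^ 2 - 1)
      ((((((4 * (↑4 * (s ^ 2) ^ 3)) * Real.log (s ^ 2) + (4 * (s ^ 2) ^ 4) * (s ^ 2)⁻¹)
          - ((12 * (↑2 * (s ^ 2) ^ 1)) * Real.log (s ^ 2) + (12 * (s ^ 2) ^ 2) * (s ^ 2)⁻¹))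
          - 3 * (↑6 * (s ^ 2) ^ 5)) - 15 * (↑4 * (s ^ 2) ^ 3)) - 13 * (↑2 * (s ^ 2) ^ 1) - 0)
      (s ^ 2) :=
    (((((((hasDerivAt_pow 4 _).const_mul 4).mul hlog).sub
        (((hasDerivAt_pow 2 _).const_mul 12).mul hlog)).sub
        ((hasDerivAt_pow 6 _).const_mul 3)).sub
        ((hasDerivAt_pow 4 _).const_mul 15)).sub
        ((hasDerivAt_pow 2 _).const_mul 13)).sub (hasDerivAt_const _ (1 : ℝ))
  have hD : HasDerivAt (fun x : ℝ => 4 * Real.sqrt x * x * (1 + x ^ 2) ^ 2)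
      (((4 * (1 / (2 * Real.sqrt (s ^ 2)))) * (s ^ 2) + (4 * Real.sqrt (s ^ 2)) * 1)
          * (1 + (s ^ 2) ^ 2) ^ 2
        + (4 * Real.sqrt (s ^ 2) * (s ^ 2))
          * (↑2 * (1 + (s ^ 2) ^ 2) ^ 1 * (0 + ↑2 * (s ^ 2) ^ 1))) (s ^ 2) :=
    (((hsrt.const_mul 4).mul (hasDerivAt_id' (s ^ 2))).mul
      (((hasDerivAt_const _ (1 : ℝ)).add (hasDerivAt_pow 2 _)).pow 2))
  have hne : 4 * Real.sqrt (s ^ 2) * (s ^ 2) * (1 + (s ^ 2) ^ 2) ^ 2 ≠ 0 := by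
    rw [hsq]; positivity
  have hQ := hP.div hD hne
  refine hQ.congr_deriv ?_
  simp only [g2fun, hsq]
  have h1 : s ≠ 0 := hs.ne'
  have h2 : (1 : ℝ) + (s ^ 2) ^ 2 ≠ 0 := by positivity
  field_simp
  ring

/-- `θ₀(r) = (1 - 4r² ln r - r⁴)/(2 r^{1/2} (1+r²))` satisfies `𝓛θ₀ = 0` on `(0,∞)`
where `𝓛 = -d²/dr² + 3/(4r²) - 8/(1+r²)²`. -/
theorem stmt_3 (θ₀ : ℝ → ℝ)
    (hθ : ∀ r : ℝ, θ₀ r = (1 - 4 * r ^ 2 * Real.log r - r ^ 4) / (2 * r ^ (1/2 : ℝ) * (1 + r ^ 2))) :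
    ∀ r : ℝ, 0 < r →
      -(deriv (deriv θ₀) r) + (3 / (4 * r ^ 2)) * θ₀ r - (8 / (1 + r ^ 2) ^ 2) * θ₀ r = 0 := by
  intro r hr
  obtain ⟨s, hs, rfl⟩ : ∃ s : ℝ, 0 < s ∧ s ^ 2 = r :=
    ⟨Real.sqrt r, Real.sqrt_pos.2 hr, Real.sq_sqrt hr.le⟩
  have hθg : θ₀ = gfun := by
    funext x
    rw [hθ x]
    simp only [gfun, Real.sqrt_eq_rpow]
  have hder : ∀ x : ℝ, 0 < x → deriv gfun x = g1fun x := by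
    intro x hx
    have h := hA (Real.sqrt x) (Real.sqrt_pos.2 hx)
    rw [Real.sq_sqrt hx.le] at h
    exact h.deriv
  have hevent : deriv gfun =ᶠ[nhds (s ^ 2)] g1fun :=
    Filter.eventuallyEq_of_mem (Ioi_mem_nhds (by positivity : (0:ℝ) < s ^ 2))
      (fun x hx => hder x hx)
  have h2 : deriv (deriv θ₀) (s ^ 2) = g2fun (s ^ 2) := by
    rw [hθg, hevent.deriv_eq]
    exact (hB s hs).deriv
  rw [h2, hθg]
  simp only [gfun, g2fun, Real.sqrt_sq hs.le]
  have h1 : s ≠ 0 := hs.ne'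
  have h2' : (1 : ℝ) + (s ^ 2) ^ 2 ≠ 0 := by positivity
  field_simp
  ring
end

section
/- The functions φ(R) = R^{3/2}/(1+R²) and θ(R) = (-1 + 4R²·ln R + R⁴)/(R^{1/2}·(1+R²)) both satisfy L̃y = 0 on (0,∞), where L̃ = ∂²_R - 3/(4R²) + 8/(1+R²)², and their Wronskian φ·θ' - φ'·θ equals 2 identically. -/
open Real

noncomputable def P1 (x : ℝ) : ℝ :=
  (3/2 * x ^ (1/2:ℝ) * (1 + x^2) - x ^ (3/2:ℝ) * (2*x)) / (1 + x^2)^2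

noncomputable def P2 (x : ℝ) : ℝ :=
  (((3/2 * (1/2 * x ^ (-(1/2):ℝ)) * (1 + x^2) + 3/2 * x ^ (1/2:ℝ) * (2*x))
      - (3/2 * x ^ (1/2:ℝ) * (2*x) + x ^ (3/2:ℝ) * 2)) * (1 + x^2)^2
    - (3/2 * x ^ (1/2:ℝ) * (1 + x^2) - x ^ (3/2:ℝ) * (2*x)) * (2 * (1 + x^2) * (2*x)))
    / ((1 + x^2)^2)^2

lemma hq' (x : ℝ) : HasDerivAt (fun y : ℝ => 1 + y^2) (2*x) x := by
  simpa using (hasDerivAt_pow 2 x).const_add 1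

lemma hr12 {x : ℝ} (hx : 0 < x) :
    HasDerivAt (fun y : ℝ => y ^ (1/2:ℝ)) (1/2 * x ^ (-(1/2):ℝ)) x := by
  have h := Real.hasDerivAt_rpow_const (x := x) (p := (1/2:ℝ)) (Or.inl hx.ne')
  convert h using 2
  norm_num

lemma hr32 {x : ℝ} (hx : 0 < x) :
    HasDerivAt (fun y : ℝ => y ^ (3/2:ℝ)) (3/2 * x ^ (1/2:ℝ)) x := by
  have h := Real.hasDerivAt_rpow_const (x := x) (p := (3/2:ℝ)) (Or.inl hx.ne')
  convert h using 2
  norm_num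

lemma hrm12 {x : ℝ} (hx : 0 < x) :
    HasDerivAt (fun y : ℝ => y ^ (-(1/2):ℝ)) (-(1/2) * x ^ (-(3/2):ℝ)) x := by
  have h := Real.hasDerivAt_rpow_const (x := x) (p := (-(1/2):ℝ)) (Or.inl hx.ne')
  convert h using 2
  norm_num

lemma hP1 {x : ℝ} (hx : 0 < x) :
    HasDerivAt (fun y : ℝ => y ^ (3/2:ℝ) / (1 + y^2)) (P1 x) x := by
  have hne : (1 + x^2) ≠ 0 := by positivity
  exact (hr32 hx).div (hq' x) hne

lemma hP2 {x : ℝ} (hx : 0 < x) : HasDerivAt P1 (P2 x) x := by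
  have hne : ((1:ℝ) + x^2)^2 ≠ 0 := by positivity
  have hN : HasDerivAt
      (fun y : ℝ => 3/2 * y ^ (1/2:ℝ) * (1 + y^2) - y ^ (3/2:ℝ) * (2*y))
      ((3/2 * (1/2 * x ^ (-(1/2):ℝ)) * (1 + x^2) + 3/2 * x ^ (1/2:ℝ) * (2*x))
        - (3/2 * x ^ (1/2:ℝ) * (2*x) + x ^ (3/2:ℝ) * 2)) x := by
    have hid : HasDerivAt (fun y : ℝ => 2*y) 2 x := by
      simpa using (hasDerivAt_id x).const_mul 2
    have h1 := (((hr12 hx).const_mul (3/2)).mul (hq' x))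
    have h2 := (hr32 hx).mul hid
    exact h1.sub h2
  have hD : HasDerivAt (fun y : ℝ => (1 + y^2)^2) (2 * (1 + x^2) * (2*x)) x := by
    exact ((hq' x).fun_pow 2).congr_deriv (by norm_num)
  exact hN.div hD hne

theorem test (x : ℝ) (hx : 0 < x) :
    P2 x - 3/(4*x^2) * (x ^ (3/2:ℝ)/(1+x^2)) + 8/(1+x^2)^2 * (x ^ (3/2:ℝ)/(1+x^2)) = 0 := by
  have hx0 : x ≠ 0 := hx.ne'
  have hq0 : (1:ℝ) + x^2 ≠ 0 := by positivity
  have hs0 : (0:ℝ) < x ^ (1/2:ℝ) := Real.rpow_pos_of_pos hx _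
  have hs2 : (x ^ (1/2:ℝ))^(2:ℕ) = x := by
    rw [← Real.rpow_natCast (x ^ (1/2:ℝ)) 2, ← Real.rpow_mul hx.le]; norm_num
  have h32 : x ^ (3/2:ℝ) = x * x ^ (1/2:ℝ) := by
    rw [show (3/2:ℝ) = 1 + 1/2 by norm_num, Real.rpow_add hx, Real.rpow_one]
  have hm12 : x ^ (-(1/2):ℝ) = (x ^ (1/2:ℝ))⁻¹ := by
    rw [Real.rpow_neg hx.le]
  simp only [P2, hm12, h32]
  set s := x ^ (1/2:ℝ) with hs
  field_simp
  rw [← hs2]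
  ring

noncomputable def Aq (x : ℝ) : ℝ := 8*x*Real.log x + 4*x^2*x⁻¹ + 4*x^3
noncomputable def Bq (x : ℝ) : ℝ := 1/2 * x ^ (-(1/2):ℝ) * (1+x^2) + x ^ (1/2:ℝ) * (2*x)
noncomputable def T1 (x : ℝ) : ℝ :=
  (Aq x * (x ^ (1/2:ℝ) * (1+x^2)) - (-1 + 4*x^2*Real.log x + x^4) * Bq x)
    / (x ^ (1/2:ℝ) * (1+x^2))^2
noncomputable def Aq' (x : ℝ) : ℝ :=
  8*Real.log x + 8*x*x⁻¹ + (8*x*x⁻¹ + 4*x^2*(-(x^2)⁻¹)) + 12*x^2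
noncomputable def Bq' (x : ℝ) : ℝ :=
  (1/2 * (-(1/2) * x ^ (-(3/2):ℝ)) * (1+x^2) + 1/2 * x ^ (-(1/2):ℝ) * (2*x))
    + (1/2 * x ^ (-(1/2):ℝ) * (2*x) + x ^ (1/2:ℝ) * 2)
noncomputable def T2 (x : ℝ) : ℝ :=
  (((Aq' x * (x ^ (1/2:ℝ) * (1+x^2)) + Aq x * Bq x)
      - (Aq x * Bq x + (-1 + 4*x^2*Real.log x + x^4) * Bq' x)) * (x ^ (1/2:ℝ) * (1+x^2))^2
    - (Aq x * (x ^ (1/2:ℝ) * (1+x^2)) - (-1 + 4*x^2*Real.log x + x^4) * Bq x)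
        * (2 * (x ^ (1/2:ℝ) * (1+x^2)) * Bq x))
    / ((x ^ (1/2:ℝ) * (1+x^2))^2)^2

lemma hAv {x : ℝ} (hx : 0 < x) :
    HasDerivAt (fun y : ℝ => -1 + 4*y^2*Real.log y + y^4) (Aq x) x := by
  have h4x2 : HasDerivAt (fun y : ℝ => 4*y^2) (8*x) x := by
    exact ((hasDerivAt_pow 2 x).const_mul 4).congr_deriv (by push_cast; ring)
  have h4 : HasDerivAt (fun y : ℝ => y^4) (4*x^3) x := by
    simpa using hasDerivAt_pow 4 x
  exact ((h4x2.mul (Real.hasDerivAt_log hx.ne')).const_add (-1)).add h4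

lemma hBv {x : ℝ} (hx : 0 < x) :
    HasDerivAt (fun y : ℝ => y ^ (1/2:ℝ) * (1+y^2)) (Bq x) x :=
  (hr12 hx).mul (hq' x)

lemma hBv0 {x : ℝ} (hx : 0 < x) : x ^ (1/2:ℝ) * (1+x^2) ≠ 0 :=
  ne_of_gt (mul_pos (Real.rpow_pos_of_pos hx _) (by positivity))

lemma hT1 {x : ℝ} (hx : 0 < x) :
    HasDerivAt (fun y : ℝ => (-1 + 4*y^2*Real.log y + y^4) / (y ^ (1/2:ℝ) * (1+y^2)))
      (T1 x) x :=
  (hAv hx).div (hBv hx) (hBv0 hx)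

lemma hAq {x : ℝ} (hx : 0 < x) : HasDerivAt Aq (Aq' x) x := by
  have h8 : HasDerivAt (fun y : ℝ => 8*y) 8 x := by
    simpa using (hasDerivAt_id x).const_mul 8
  have h4x2 : HasDerivAt (fun y : ℝ => 4*y^2) (8*x) x := by
    exact ((hasDerivAt_pow 2 x).const_mul 4).congr_deriv (by push_cast; ring)
  have h4x3 : HasDerivAt (fun y : ℝ => 4*y^3) (12*x^2) x := by
    exact ((hasDerivAt_pow 3 x).const_mul 4).congr_deriv (by push_cast; ring)
  exact ((h8.mul (Real.hasDerivAt_log hx.ne')).add (h4x2.mul (hasDerivAt_inv hx.ne'))).add h4x3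

lemma hBq {x : ℝ} (hx : 0 < x) : HasDerivAt Bq (Bq' x) x := by
  have hid : HasDerivAt (fun y : ℝ => 2*y) 2 x := by
    simpa using (hasDerivAt_id x).const_mul 2
  exact ((((hrm12 hx).const_mul (1/2)).mul (hq' x))).add ((hr12 hx).mul hid)

lemma hT2 {x : ℝ} (hx : 0 < x) : HasDerivAt T1 (T2 x) x := by
  have hM : HasDerivAt
      (fun y : ℝ => Aq y * (y ^ (1/2:ℝ) * (1+y^2)) - (-1 + 4*y^2*Real.log y + y^4) * Bq y)
      ((Aq' x * (x ^ (1/2:ℝ) * (1+x^2)) + Aq x * Bq x)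
        - (Aq x * Bq x + (-1 + 4*x^2*Real.log x + x^4) * Bq' x)) x :=
    ((hAq hx).mul (hBv hx)).sub ((hAv hx).mul (hBq hx))
  have hE : HasDerivAt (fun y : ℝ => (y ^ (1/2:ℝ) * (1+y^2))^2)
      (2 * (x ^ (1/2:ℝ) * (1+x^2)) * Bq x) x := by
    exact ((hBv hx).fun_pow 2).congr_deriv (by norm_num)
  exact hM.div hE (pow_ne_zero 2 (hBv0 hx))

theorem test_theta (x : ℝ) (hx : 0 < x) :
    T2 x - 3/(4*x^2) * ((-1 + 4*x^2*Real.log x + x^4) / (x ^ (1/2:ℝ) * (1+x^2)))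
      + 8/(1+x^2)^2 * ((-1 + 4*x^2*Real.log x + x^4) / (x ^ (1/2:ℝ) * (1+x^2))) = 0 := by
  have hx0 : x ≠ 0 := hx.ne'
  have hq0 : (1:ℝ) + x^2 ≠ 0 := by positivity
  have hs0 : (0:ℝ) < x ^ (1/2:ℝ) := Real.rpow_pos_of_pos hx _
  have hs2 : (x ^ (1/2:ℝ))^(2:ℕ) = x := by
    rw [← Real.rpow_natCast (x ^ (1/2:ℝ)) 2, ← Real.rpow_mul hx.le]; norm_num
  have h32 : x ^ (3/2:ℝ) = x * x ^ (1/2:ℝ) := by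
    rw [show (3/2:ℝ) = 1 + 1/2 by norm_num, Real.rpow_add hx, Real.rpow_one]
  have hm12 : x ^ (-(1/2):ℝ) = (x ^ (1/2:ℝ))⁻¹ := by
    rw [Real.rpow_neg hx.le]
  have hm32 : x ^ (-(3/2):ℝ) = (x * x ^ (1/2:ℝ))⁻¹ := by
    rw [Real.rpow_neg hx.le, h32]
  simp only [T2, Aq, Bq, Aq', Bq', hm12, hm32, h32]
  set s := x ^ (1/2:ℝ) with hs
  field_simp
  rw [← hs2]
  ring

theorem test_wr (x : ℝ) (hx : 0 < x) :
    (x ^ (3/2:ℝ)/(1+x^2)) * T1 x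
      - P1 x * ((-1 + 4*x^2*Real.log x + x^4) / (x ^ (1/2:ℝ) * (1+x^2))) = 2 := by
  have hx0 : x ≠ 0 := hx.ne'
  have hq0 : (1:ℝ) + x^2 ≠ 0 := by positivity
  have hs0 : (0:ℝ) < x ^ (1/2:ℝ) := Real.rpow_pos_of_pos hx _
  have hs2 : (x ^ (1/2:ℝ))^(2:ℕ) = x := by
    rw [← Real.rpow_natCast (x ^ (1/2:ℝ)) 2, ← Real.rpow_mul hx.le]; norm_num
  have h32 : x ^ (3/2:ℝ) = x * x ^ (1/2:ℝ) := by
    rw [show (3/2:ℝ) = 1 + 1/2 by norm_num, Real.rpow_add hx, Real.rpow_one]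
  have hm12 : x ^ (-(1/2):ℝ) = (x ^ (1/2:ℝ))⁻¹ := by
    rw [Real.rpow_neg hx.le]
  simp only [T1, P1, Aq, Bq, hm12, h32]
  set s := x ^ (1/2:ℝ) with hs
  field_simp
  rw [← hs2]
  ring


/-- `φ(R) = R^{3/2}/(1+R²)` and `θ(R) = (-1 + 4R² ln R + R⁴)/(R^{1/2}(1+R²))` both solve
`L̃ y = 0` on `(0,∞)` with `L̃ = ∂²_R - 3/(4R²) + 8/(1+R²)²`, and their Wronskian
`φ θ' - φ' θ` is identically `2`. -/
theorem stmt_5 (φ θ : ℝ → ℝ)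
    (hφ : ∀ R : ℝ, φ R = R ^ (3/2 : ℝ) / (1 + R ^ 2))
    (hθ : ∀ R : ℝ, θ R = (-1 + 4 * R ^ 2 * Real.log R + R ^ 4) / (R ^ (1/2 : ℝ) * (1 + R ^ 2))) :
    ∀ R : ℝ, 0 < R →
      (deriv (deriv φ) R - (3 / (4 * R ^ 2)) * φ R + (8 / (1 + R ^ 2) ^ 2) * φ R = 0) ∧
      (deriv (deriv θ) R - (3 / (4 * R ^ 2)) * θ R + (8 / (1 + R ^ 2) ^ 2) * θ R = 0) ∧
      (φ R * deriv θ R - deriv φ R * θ R = 2) := by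
  have hφf : φ = fun y : ℝ => y ^ (3/2:ℝ) / (1 + y^2) := funext hφ
  have hθf : θ = fun y : ℝ => (-1 + 4*y^2*Real.log y + y^4) / (y ^ (1/2:ℝ) * (1+y^2)) :=
    funext hθ
  subst hφf hθf
  intro R hR
  have e1 : deriv (fun y : ℝ => y ^ (3/2:ℝ) / (1 + y^2)) =ᶠ[nhds R] P1 :=
    Filter.eventuallyEq_of_mem (Ioi_mem_nhds hR) (fun y hy => (hP1 hy).deriv)
  have e2 : deriv (fun y : ℝ => (-1 + 4*y^2*Real.log y + y^4) / (y ^ (1/2:ℝ) * (1+y^2)))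
      =ᶠ[nhds R] T1 :=
    Filter.eventuallyEq_of_mem (Ioi_mem_nhds hR) (fun y hy => (hT1 hy).deriv)
  have d1 : deriv (deriv (fun y : ℝ => y ^ (3/2:ℝ) / (1 + y^2))) R = P2 R := by
    rw [e1.deriv_eq, (hP2 hR).deriv]
  have d2 : deriv (deriv (fun y : ℝ => (-1 + 4*y^2*Real.log y + y^4)
      / (y ^ (1/2:ℝ) * (1+y^2)))) R = T2 R := by
    rw [e2.deriv_eq, (hT2 hR).deriv]
  refine ⟨?_, ?_, ?_⟩
  · rw [d1]
    simpa using test R hR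
  · rw [d2]
    simpa using test_theta R hR
  · rw [(hP1 hR).deriv, (hT1 hR).deriv]
    simpa using test_wr R hR
end

section
/- Let ν > 0 and consider the ODE φ''(τ) + τ^{-2-2/ν}·φ(τ) = 0 on (0,∞). Define formal coefficients by c_{j,0} = 1 and c_{j,k}·(j - 2k/ν)·(j - 1 - 2k/ν) + c_{j,k-1} = 0 for k ≥ 1, j ∈ {0,1}. If ν is not an even integer then these recursions are solvable, the coefficients satisfy |c_{j,k}| ≤ C^k/(k!)² for some C, and φ_j(τ) = Σ_{k≥0} c_{j,k}·τ^{j-2k/ν} converges for all τ > 0 and solves the ODE. -/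
open Real Filter

private noncomputable def ccoef (ν : ℝ) (j : ℕ) : ℕ → ℝ
  | 0 => 1
  | k + 1 => - ccoef ν j k /
      (((j : ℝ) - 2 * ((k : ℝ) + 1) / ν) * ((j : ℝ) - 1 - 2 * ((k : ℝ) + 1) / ν))

section helpers
private lemma summable_master (C Q : ℝ) (m : ℕ) (hC : 0 ≤ C) (hQ : 0 ≤ Q) :
    Summable (fun k : ℕ => C ^ k / ((Nat.factorial k : ℝ)) ^ 2 * ((k : ℝ) + 1) ^ m * Q ^ k) := by
  refine Summable.of_nonneg_of_le (fun k => by positivity)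
    (fun k => ?_) (Real.summable_pow_div_factorial ((2 : ℝ) ^ m * C * Q))
  have h1 : ((k : ℝ) + 1) ≤ 2 ^ k := by exact_mod_cast Nat.lt_two_pow_self (n := k)
  have h2 : (1 : ℝ) ≤ (Nat.factorial k : ℝ) := Nat.one_le_cast.mpr k.factorial_pos
  have h3 : (Nat.factorial k : ℝ) ≤ ((Nat.factorial k : ℝ)) ^ 2 := by nlinarith
  calc C ^ k / ((Nat.factorial k : ℝ)) ^ 2 * ((k : ℝ) + 1) ^ m * Q ^ k
      ≤ C ^ k / (Nat.factorial k : ℝ) * ((2 : ℝ) ^ k) ^ m * Q ^ k := by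
        gcongr
    _ = ((2 : ℝ) ^ m * C * Q) ^ k / (Nat.factorial k : ℝ) := by
        rw [mul_pow, mul_pow]; ring

private lemma rpow_le_M {a b t M : ℝ} (β : ℝ) (ha : 0 < a) (hM1 : 1 ≤ M) (hbM : b ≤ M)
    (haM : a⁻¹ ≤ M) (hta : a ≤ t) (htb : t ≤ b) : t ^ β ≤ M ^ |β| := by
  have ht : 0 < t := lt_of_lt_of_le ha hta
  rcases le_or_gt 0 β with hβ | hβ
  · rw [abs_of_nonneg hβ]
    exact Real.rpow_le_rpow ht.le (htb.trans hbM) hβ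
  · rw [abs_of_neg hβ]
    calc t ^ β ≤ a ^ β := Real.rpow_le_rpow_of_nonpos ha hta hβ.le
      _ = (a⁻¹) ^ (-β) := by
          rw [Real.inv_rpow ha.le, Real.rpow_neg ha.le, inv_inv]
      _ ≤ M ^ (-β) := Real.rpow_le_rpow (inv_nonneg.mpr ha.le) haM (neg_nonneg.mpr hβ.le)

private lemma eps_bound (ν : ℝ) (hν : 0 < ν) (hνe : ∀ n : ℤ, ν ≠ 2 * (n : ℝ))
    (j : ℕ) (hj : j = 0 ∨ j = 1) :
    ∃ ε > (0:ℝ), ∀ k : ℕ, 1 ≤ k →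
      ε * (k : ℝ) ^ 2 ≤ |((j : ℝ) - 2 * (k : ℝ) / ν) * ((j : ℝ) - 1 - 2 * (k : ℝ) / ν)| := by
  rcases hj with rfl | rfl
  · refine ⟨4 / ν ^ 2, by positivity, fun k hk => ?_⟩
    have hk1 : (1 : ℝ) ≤ (k : ℝ) := Nat.one_le_cast.mpr hk
    have hnn : (0:ℝ) ≤ (((0:ℕ) : ℝ) - 2 * (k : ℝ) / ν) * (((0:ℕ) : ℝ) - 1 - 2 * (k : ℝ) / ν) := by
      push_cast
      have h2 : 0 ≤ 2 * (k:ℝ) / ν := by positivity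
      nlinarith
    rw [abs_of_nonneg hnn]
    push_cast
    have h2 : (0:ℝ) < 2 * (k:ℝ) / ν := by positivity
    have h3 : 4 / ν ^ 2 * (k:ℝ) ^ 2 = (2 * (k:ℝ) / ν) ^ 2 := by field_simp; ring
    nlinarith
  · set N := ⌈ν⌉₊ with hN
    have hN1 : 1 ≤ N := Nat.one_le_iff_ne_zero.mpr (by
      simp only [hN, ne_eq, Nat.ceil_eq_zero, not_le]; exact hν)
    have hmem : (1 : ℕ) ∈ Finset.Icc 1 N := Finset.mem_Icc.mpr ⟨le_refl 1, hN1⟩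
    set δ := Finset.inf' (Finset.Icc 1 N) (Finset.nonempty_Icc.mpr hN1) (fun k : ℕ => |ν - 2 * (k : ℝ)|) with hδ
    have hδpos : 0 < δ := by
      rw [hδ, Finset.lt_inf'_iff]
      intro k hk
      refine abs_pos.mpr (sub_ne_zero.mpr ?_)
      intro h
      exact hνe k (by push_cast; linarith)
    have hδle : ∀ k ∈ Finset.Icc 1 N, δ ≤ |ν - 2 * (k : ℝ)| := fun k hk => Finset.inf'_le _ hk
    have hNpos : (0:ℝ) < N := by exact_mod_cast hN1
    refine ⟨min (2 / ν ^ 2) (2 * δ / (ν ^ 2 * N)), by positivity, fun k hk => ?_⟩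
    have hk1 : (1 : ℝ) ≤ (k : ℝ) := Nat.one_le_cast.mpr hk
    have habs : |(((1:ℕ) : ℝ) - 2 * (k : ℝ) / ν) * (((1:ℕ) : ℝ) - 1 - 2 * (k : ℝ) / ν)|
        = |ν - 2 * (k : ℝ)| * (2 * (k : ℝ)) / ν ^ 2 := by
      push_cast
      have h1 : (1:ℝ) - 2 * (k:ℝ) / ν = (ν - 2 * (k:ℝ)) / ν := by field_simp
      have h2 : (1:ℝ) - 1 - 2 * (k:ℝ) / ν = -(2 * (k:ℝ) / ν) := by ring
      rw [h1, h2, abs_mul, abs_div, abs_of_pos hν, abs_neg,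
        abs_of_nonneg (by positivity : (0:ℝ) ≤ 2 * (k:ℝ) / ν)]
      ring
    rw [habs]
    by_cases hkN : k ≤ N
    · have hd := hδle k (Finset.mem_Icc.mpr ⟨hk, hkN⟩)
      have hkN' : (k : ℝ) ≤ (N : ℝ) := Nat.cast_le.mpr hkN
      have hmin : min (2 / ν ^ 2) (2 * δ / (ν ^ 2 * N)) ≤ 2 * δ / (ν ^ 2 * N) := min_le_right _ _
      have h0 : (0:ℝ) ≤ |ν - 2 * (k:ℝ)| := abs_nonneg _
      have key : 2 * δ / (ν ^ 2 * N) * (k:ℝ) ^ 2 ≤ |ν - 2 * (k:ℝ)| * (2 * (k:ℝ)) / ν ^ 2 := by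
        rw [div_mul_eq_mul_div, div_le_div_iff₀ (by positivity) (by positivity)]
        have e1 : δ * (k:ℝ) ≤ |ν - 2 * (k:ℝ)| * (N:ℝ) :=
          mul_le_mul hd hkN' (by positivity) h0
        nlinarith [mul_le_mul_of_nonneg_right e1 (show (0:ℝ) ≤ 2 * (k:ℝ) * ν ^ 2 by positivity)]
      calc min (2 / ν ^ 2) (2 * δ / (ν ^ 2 * N)) * (k:ℝ) ^ 2
          ≤ 2 * δ / (ν ^ 2 * N) * (k:ℝ) ^ 2 :=
            mul_le_mul_of_nonneg_right hmin (sq_nonneg _)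
        _ ≤ _ := key
    · push_neg at hkN
      have hνN : ν ≤ (N : ℝ) := Nat.le_ceil ν
      have hNk : (N : ℝ) + 1 ≤ (k : ℝ) := by exact_mod_cast hkN
      have hνk : ν ≤ (k : ℝ) := by linarith
      have habs2 : |ν - 2 * (k:ℝ)| = 2 * (k:ℝ) - ν := by
        rw [abs_of_nonpos (by linarith)]; ring
      rw [habs2]
      have hmin : min (2 / ν ^ 2) (2 * δ / (ν ^ 2 * N)) ≤ 2 / ν ^ 2 := min_le_left _ _
      have key : 2 / ν ^ 2 * (k:ℝ) ^ 2 ≤ (2 * (k:ℝ) - ν) * (2 * (k:ℝ)) / ν ^ 2 := by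
        rw [div_mul_eq_mul_div, div_le_div_iff₀ (by positivity) (by positivity)]
        nlinarith [mul_nonneg (mul_nonneg (by positivity : (0:ℝ) ≤ 2 * (k:ℝ))
          (sub_nonneg.mpr hνk)) (sq_nonneg ν)]
      calc min (2 / ν ^ 2) (2 * δ / (ν ^ 2 * N)) * (k:ℝ) ^ 2
          ≤ 2 / ν ^ 2 * (k:ℝ) ^ 2 := mul_le_mul_of_nonneg_right hmin (sq_nonneg _)
        _ ≤ _ := key

end helpers

private lemma rpow_interval_bound {a b t M ν : ℝ} (k : ℕ) {β m : ℝ}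
    (ha : 0 < a) (hM1 : 1 ≤ M) (hbM : b ≤ M) (haM : a⁻¹ ≤ M) (hta : a ≤ t) (htb : t ≤ b)
    (hν : 0 < ν) (hβ : |β| ≤ m + 2 * (k : ℝ) / ν) :
    t ^ β ≤ M ^ m * (M ^ (2 / ν)) ^ k := by
  have hM0 : (0:ℝ) < M := lt_of_lt_of_le one_pos hM1
  calc t ^ β ≤ M ^ |β| := rpow_le_M β ha hM1 hbM haM hta htb
    _ ≤ M ^ (m + 2 * (k:ℝ) / ν) := Real.rpow_le_rpow_of_exponent_le hM1 hβ
    _ = M ^ m * (M ^ (2 / ν)) ^ k := by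
        rw [Real.rpow_add hM0]
        congr 1
        rw [show 2 * (k:ℝ) / ν = (2 / ν) * (k : ℝ) by ring, Real.rpow_mul hM0.le,
          Real.rpow_natCast]

set_option maxHeartbeats 1000000 in
/-- For `ν > 0` not an even integer and `j ∈ {0,1}`, the recursion
`c_{j,0} = 1`, `c_{j,k}(j - 2k/ν)(j - 1 - 2k/ν) + c_{j,k-1} = 0` is solvable, the
coefficients satisfy `|c_{j,k}| ≤ C^k/(k!)²`, and
`φ_j(τ) = Σ_k c_{j,k} τ^{j-2k/ν}` converges for all `τ > 0` and solves
`φ'' + τ^{-2-2/ν} φ = 0`. -/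
theorem stmt_16 (ν : ℝ) (hν : 0 < ν) (hνe : ∀ n : ℤ, ν ≠ 2 * (n : ℝ))
    (j : ℕ) (hj : j = 0 ∨ j = 1) :
    ∃ c : ℕ → ℝ, c 0 = 1 ∧
      (∀ k : ℕ, 1 ≤ k →
        c k * (((j : ℝ) - 2 * (k : ℝ) / ν) * ((j : ℝ) - 1 - 2 * (k : ℝ) / ν)) + c (k - 1) = 0) ∧
      (∃ C > (0:ℝ), ∀ k : ℕ, |c k| ≤ C ^ k / ((Nat.factorial k : ℝ)) ^ 2) ∧
      (∀ τ : ℝ, 0 < τ →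
        Summable (fun k : ℕ => c k * τ ^ ((j : ℝ) - 2 * (k : ℝ) / ν))) ∧
      (∀ τ : ℝ, 0 < τ →
        deriv (deriv (fun t : ℝ => ∑' k : ℕ, c k * t ^ ((j : ℝ) - 2 * (k : ℝ) / ν))) τ
          + τ ^ (-2 - 2 / ν) * (∑' k : ℕ, c k * τ ^ ((j : ℝ) - 2 * (k : ℝ) / ν)) = 0) := by
  have hj0 : (0:ℝ) ≤ (j : ℝ) := Nat.cast_nonneg j
  have hj1 : (j : ℝ) ≤ 1 := by rcases hj with rfl | rfl <;> norm_num
  have hj01 : (j : ℝ) * ((j : ℝ) - 1) = 0 := by rcases hj with rfl | rfl <;> norm_num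
  obtain ⟨ε, hε, hεb⟩ := eps_bound ν hν hνe j hj
  set c := ccoef ν j with hcdef
  set α : ℕ → ℝ := fun k => (j : ℝ) - 2 * (k : ℝ) / ν with hα
  set P : ℕ → ℝ := fun k => ((j : ℝ) - 2 * (k : ℝ) / ν) * ((j : ℝ) - 1 - 2 * (k : ℝ) / ν)
    with hPdef
  have hPα : ∀ k, P k = α k * (α k - 1) := by intro k; simp only [hPdef, hα]; ring
  have hc0 : c 0 = 1 := rfl
  have hcsucc : ∀ k : ℕ, c (k + 1) = - c k / P (k + 1) := by
    intro k
    show ccoef ν j (k + 1) = _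
    rw [ccoef]
    congr 2 <;> push_cast <;> ring
  have hεb' : ∀ k : ℕ, 1 ≤ k → ε * (k : ℝ) ^ 2 ≤ |P k| := hεb
  have hPne : ∀ k : ℕ, 1 ≤ k → P k ≠ 0 := by
    intro k hk h
    have h1 := hεb' k hk
    rw [h, abs_zero] at h1
    have hk1 : (1:ℝ) ≤ (k:ℝ) := Nat.one_le_cast.mpr hk
    nlinarith [mul_pos hε (show (0:ℝ) < (k:ℝ)^2 by nlinarith)]
  have hrec : ∀ k : ℕ, 1 ≤ k → c k * P k + c (k - 1) = 0 := by
    intro k hk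
    obtain ⟨m, rfl⟩ : ∃ m, k = m + 1 := ⟨k - 1, by omega⟩
    rw [hcsucc m, Nat.add_sub_cancel, neg_div, neg_mul,
      div_mul_cancel₀ _ (hPne (m + 1) (by omega))]
    ring
  set C : ℝ := ε⁻¹ with hCdef
  have hCpos : 0 < C := inv_pos.mpr hε
  have hbound : ∀ k : ℕ, |c k| ≤ C ^ k / ((Nat.factorial k : ℝ)) ^ 2 := by
    intro k
    induction k with
    | zero => simp [hc0]
    | succ k ih =>
      have hk1 : (1:ℕ) ≤ k + 1 := by omega
      have hP1 : ε * ((k:ℝ) + 1) ^ 2 ≤ |P (k + 1)| := by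
        have := hεb' (k + 1) hk1
        push_cast at this
        linarith
      have hd : (0:ℝ) < ε * ((k:ℝ) + 1) ^ 2 := by positivity
      have hfac : (0:ℝ) < (Nat.factorial k : ℝ) := Nat.cast_pos.mpr k.factorial_pos
      calc |c (k + 1)| = |c k| / |P (k + 1)| := by
            rw [hcsucc k, abs_div, abs_neg]
        _ ≤ (C ^ k / ((Nat.factorial k : ℝ)) ^ 2) / (ε * ((k:ℝ) + 1) ^ 2) :=
            div_le_div₀ (by positivity) ih hd hP1
        _ = C ^ (k + 1) / ((Nat.factorial (k + 1) : ℝ)) ^ 2 := by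
            rw [Nat.factorial_succ, hCdef]
            push_cast
            field_simp
            ring_nf
            simp [hε.ne']
  -- summability
  have hCnn : (0:ℝ) ≤ C := hCpos.le
  have hexp : ∀ τ : ℝ, 0 < τ → ∀ k : ℕ, τ ^ (α k) = τ ^ ((j:ℝ)) * (τ ^ (-2 / ν)) ^ k := by
    intro τ hτ k
    have h1 : α k = (j:ℝ) + (-2 / ν) * (k : ℝ) := by simp only [hα]; ring
    rw [h1, Real.rpow_add hτ]
    congr 1
    rw [← Real.rpow_natCast (τ ^ (-2 / ν)) k, ← Real.rpow_mul hτ.le]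
  have hnorm : ∀ τ : ℝ, 0 < τ → ∀ k : ℕ,
      ‖c k * τ ^ (α k)‖ ≤ τ ^ ((j:ℝ)) * (C ^ k / ((Nat.factorial k : ℝ)) ^ 2 * ((k:ℝ)+1) ^ 0
        * (τ ^ (-2 / ν)) ^ k) := by
    intro τ hτ k
    have hq : (0:ℝ) ≤ τ ^ (-2 / ν) := Real.rpow_nonneg hτ.le _
    rw [norm_mul, Real.norm_rpow_of_nonneg hτ.le, Real.norm_of_nonneg hτ.le, hexp τ hτ k,
      Real.norm_eq_abs]
    have h2 : (0:ℝ) ≤ τ ^ ((j:ℝ)) * (τ ^ (-2 / ν)) ^ k := by positivity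
    calc |c k| * (τ ^ ((j:ℝ)) * (τ ^ (-2 / ν)) ^ k)
        ≤ (C ^ k / ((Nat.factorial k : ℝ)) ^ 2) * (τ ^ ((j:ℝ)) * (τ ^ (-2 / ν)) ^ k) :=
          mul_le_mul_of_nonneg_right (hbound k) h2
      _ = τ ^ ((j:ℝ)) * (C ^ k / ((Nat.factorial k : ℝ)) ^ 2 * ((k:ℝ)+1) ^ 0
          * (τ ^ (-2 / ν)) ^ k) := by ring
  have hsum : ∀ τ : ℝ, 0 < τ → Summable (fun k : ℕ => c k * τ ^ (α k)) := by
    intro τ hτ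
    exact Summable.of_norm_bounded
      (((summable_master C (τ ^ (-2 / ν)) 0 hCnn (Real.rpow_nonneg hτ.le _)).mul_left
        (τ ^ ((j:ℝ))))) (hnorm τ hτ)
  refine ⟨c, hc0, hrec, ⟨C, hCpos, hbound⟩, hsum, ?_⟩
  -- the ODE
  intro τ hτ
  set a : ℝ := min (τ / 2) 2⁻¹ with hadef
  set b : ℝ := τ + 1 with hbdef
  set M : ℝ := max b a⁻¹ with hMdef
  have ha0 : 0 < a := lt_min (by linarith) (by norm_num)
  have haτ : a < τ := lt_of_le_of_lt (min_le_left _ _) (by linarith)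
  have hτb : τ < b := by rw [hbdef]; linarith
  have hM1 : (1:ℝ) ≤ M := by
    have h2 : (2:ℝ) ≤ a⁻¹ := by
      have := inv_anti₀ ha0 (min_le_right (τ / 2) 2⁻¹)
      simpa using this
    exact le_trans (by linarith) (le_max_right _ _)
  have hbM : b ≤ M := le_max_left _ _
  have haM : a⁻¹ ≤ M := le_max_right _ _
  have hM0 : (0:ℝ) < M := lt_of_lt_of_le one_pos hM1
  set Q : ℝ := M ^ (2 / ν) with hQdef
  have hQ0 : (0:ℝ) ≤ Q := Real.rpow_nonneg hM0.le _
  have hτs : τ ∈ Set.Ioo a b := ⟨haτ, hτb⟩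
  have hkν : ∀ k : ℕ, (0:ℝ) ≤ 2 * (k:ℝ) / ν := fun k => by positivity
  have hkν' : ∀ k : ℕ, 2 * (k:ℝ) / ν ≤ 2 / ν * ((k:ℝ) + 1) := by
    intro k
    have h1 : 2 * (k:ℝ) / ν = 2 / ν * (k:ℝ) := by ring
    have h2 : (0:ℝ) ≤ 2 / ν := by positivity
    nlinarith
  have hαb : ∀ k : ℕ, |α k| ≤ (1 + 2 / ν) * ((k:ℝ) + 1) := by
    intro k
    have h1 := hkν k; have h2 := hkν' k
    have h4 : (0:ℝ) ≤ 2 / ν * ((k:ℝ) + 1) := by positivity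
    have h5 : (1:ℝ) ≤ (k:ℝ) + 1 := by
      have := Nat.cast_nonneg (α := ℝ) k; linarith
    have hexp : (1 + 2 / ν) * ((k:ℝ) + 1) = ((k:ℝ) + 1) + 2 / ν * ((k:ℝ) + 1) := by ring
    rw [abs_le]
    constructor <;> simp only [hα] <;> linarith
  have hα1b : ∀ k : ℕ, |α k - 1| ≤ (2 + 2 / ν) * ((k:ℝ) + 1) := by
    intro k
    have h1 := hkν k; have h2 := hkν' k
    have h4 : (0:ℝ) ≤ 2 / ν * ((k:ℝ) + 1) := by positivity
    have h5 : (1:ℝ) ≤ (k:ℝ) + 1 := by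
      have := Nat.cast_nonneg (α := ℝ) k; linarith
    have hexp : (2 + 2 / ν) * ((k:ℝ) + 1) = 2 * ((k:ℝ) + 1) + 2 / ν * ((k:ℝ) + 1) := by ring
    rw [abs_le]
    constructor <;> simp only [hα] <;> linarith
  have habs1 : ∀ k : ℕ, |α k - 1| ≤ 2 + 2 * (k:ℝ) / ν := by
    intro k
    have h1 := hkν k
    rw [abs_le]
    constructor <;> simp only [hα] <;> linarith
  have habs2 : ∀ k : ℕ, |α k - 2| ≤ 3 + 2 * (k:ℝ) / ν := by
    intro k
    have h1 := hkν k
    rw [abs_le]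
    constructor <;> simp only [hα] <;> linarith
  set f1 : ℕ → ℝ → ℝ := fun k t => c k * α k * t ^ (α k - 1) with hf1
  set f2 : ℕ → ℝ → ℝ := fun k t => c k * α k * (α k - 1) * t ^ (α k - 2) with hf2
  set v1 : ℕ → ℝ := fun k => (1 + 2 / ν) * M ^ (2:ℝ)
    * (C ^ k / ((Nat.factorial k : ℝ)) ^ 2 * ((k:ℝ) + 1) ^ 1 * Q ^ k) with hv1def
  set v2 : ℕ → ℝ := fun k => (1 + 2 / ν) * ((2 + 2 / ν) * M ^ (3:ℝ))
    * (C ^ k / ((Nat.factorial k : ℝ)) ^ 2 * ((k:ℝ) + 1) ^ 2 * Q ^ k) with hv2def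
  have hv1 : Summable v1 := (summable_master C Q 1 hCnn hQ0).mul_left _
  have hv2 : Summable v2 := (summable_master C Q 2 hCnn hQ0).mul_left _
  have hder1 : ∀ k : ℕ, ∀ y ∈ Set.Ioo a b, HasDerivAt (fun t => c k * t ^ (α k)) (f1 k y) y := by
    intro k y hy
    have hy0 : y ≠ 0 := ne_of_gt (lt_trans ha0 hy.1)
    have h := (Real.hasDerivAt_rpow_const (x := y) (p := α k) (Or.inl hy0)).const_mul (c k)
    convert h using 1
    show c k * α k * y ^ (α k - 1) = _; ring
    all_goals rfl
  have hder2 : ∀ k : ℕ, ∀ y ∈ Set.Ioo a b, HasDerivAt (f1 k) (f2 k y) y := by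
    intro k y hy
    have hy0 : y ≠ 0 := ne_of_gt (lt_trans ha0 hy.1)
    have h := (Real.hasDerivAt_rpow_const (x := y) (p := α k - 1) (Or.inl hy0)).const_mul
      (c k * α k)
    have he : α k - 1 - 1 = α k - 2 := by ring
    rw [he] at h
    convert h using 1
    show c k * α k * (α k - 1) * y ^ (α k - 2) = _; ring
    all_goals rfl
  have hb1 : ∀ k : ℕ, ∀ y ∈ Set.Ioo a b, ‖f1 k y‖ ≤ v1 k := by
    intro k y hy
    have hy0 : 0 < y := lt_trans ha0 hy.1
    have ht : y ^ (α k - 1) ≤ M ^ (2:ℝ) * Q ^ k :=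
      rpow_interval_bound k ha0 hM1 hbM haM hy.1.le hy.2.le hν (habs1 k)
    have h0 : (0:ℝ) ≤ y ^ (α k - 1) := Real.rpow_nonneg hy0.le _
    have hnorm1 : ‖f1 k y‖ = |c k| * |α k| * y ^ (α k - 1) := by
      simp only [hf1, Real.norm_eq_abs, abs_mul, abs_of_pos (Real.rpow_pos_of_pos hy0 (α k - 1))]
    rw [hnorm1]
    calc |c k| * |α k| * y ^ (α k - 1)
        ≤ (C ^ k / ((Nat.factorial k : ℝ)) ^ 2) * ((1 + 2 / ν) * ((k:ℝ) + 1))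
            * (M ^ (2:ℝ) * Q ^ k) := by
          have := mul_le_mul (hbound k) (hαb k) (abs_nonneg _) (by positivity)
          exact mul_le_mul this ht h0 (by positivity)
      _ = v1 k := by simp only [hv1def]; ring
  have hb2 : ∀ k : ℕ, ∀ y ∈ Set.Ioo a b, ‖f2 k y‖ ≤ v2 k := by
    intro k y hy
    have hy0 : 0 < y := lt_trans ha0 hy.1
    have ht : y ^ (α k - 2) ≤ M ^ (3:ℝ) * Q ^ k :=
      rpow_interval_bound k ha0 hM1 hbM haM hy.1.le hy.2.le hν (habs2 k)
    have h0 : (0:ℝ) ≤ y ^ (α k - 2) := Real.rpow_nonneg hy0.le _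
    have hnorm2 : ‖f2 k y‖ = |c k| * |α k| * |α k - 1| * y ^ (α k - 2) := by
      simp only [hf2, Real.norm_eq_abs, abs_mul, abs_of_pos (Real.rpow_pos_of_pos hy0 (α k - 2))]
    rw [hnorm2]
    calc |c k| * |α k| * |α k - 1| * y ^ (α k - 2)
        ≤ (C ^ k / ((Nat.factorial k : ℝ)) ^ 2) * ((1 + 2 / ν) * ((k:ℝ) + 1))
            * ((2 + 2 / ν) * ((k:ℝ) + 1)) * (M ^ (3:ℝ) * Q ^ k) := by
          have h1 := mul_le_mul (hbound k) (hαb k) (abs_nonneg _) (by positivity)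
          have h2 := mul_le_mul h1 (hα1b k) (abs_nonneg _) (by positivity)
          exact mul_le_mul h2 ht h0 (by positivity)
      _ = v2 k := by simp only [hv2def]; ring
  have hg0 : Summable (fun k : ℕ => c k * τ ^ (α k)) := hsum τ hτ
  have H1 : ∀ y ∈ Set.Ioo a b,
      HasDerivAt (fun t : ℝ => ∑' k : ℕ, c k * t ^ (α k)) (∑' k : ℕ, f1 k y) y := fun y hy =>
    hasDerivAt_tsum_of_isPreconnected hv1 isOpen_Ioo isPreconnected_Ioo hder1 hb1 hτs hg0 hy
  have hSf1 : ∀ y ∈ Set.Ioo a b, Summable (fun k : ℕ => f1 k y) := fun y hy =>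
    Summable.of_norm_bounded hv1 (fun k => hb1 k y hy)
  have H2 : HasDerivAt (fun z : ℝ => ∑' k : ℕ, f1 k z) (∑' k : ℕ, f2 k τ) τ :=
    hasDerivAt_tsum_of_isPreconnected hv2 isOpen_Ioo isPreconnected_Ioo hder2 hb2 hτs
      (hSf1 τ hτs) hτs
  have hEq : deriv (fun t : ℝ => ∑' k : ℕ, c k * t ^ (α k)) =ᶠ[nhds τ]
      fun z : ℝ => ∑' k : ℕ, f1 k z := by
    filter_upwards [isOpen_Ioo.mem_nhds hτs] with y hy
    exact (H1 y hy).deriv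
  have hdd : deriv (deriv (fun t : ℝ => ∑' k : ℕ, c k * t ^ (α k))) τ = ∑' k : ℕ, f2 k τ := by
    rw [hEq.deriv_eq]
    exact H2.deriv
  have hSf2 : Summable (fun k : ℕ => f2 k τ) :=
    Summable.of_norm_bounded hv2 (fun k => hb2 k τ hτs)
  have hshift : ∀ k : ℕ, f2 (k + 1) τ = -(τ ^ (-2 - 2 / ν)) * (c k * τ ^ (α k)) := by
    intro k
    have hcp : c (k + 1) * (α (k + 1) * (α (k + 1) - 1)) = - c k := by
      rw [← hPα, hcsucc k, div_mul_cancel₀ _ (hPne (k + 1) (by omega))]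
    have hrp : τ ^ (α (k + 1) - 2) = τ ^ (-2 - 2 / ν) * τ ^ (α k) := by
      rw [← Real.rpow_add hτ]
      congr 1
      simp only [hα]
      push_cast
      field_simp
      ring
    calc f2 (k + 1) τ = (c (k + 1) * (α (k + 1) * (α (k + 1) - 1))) * τ ^ (α (k + 1) - 2) := by
          simp only [hf2]; ring
      _ = - c k * (τ ^ (-2 - 2 / ν) * τ ^ (α k)) := by rw [hcp, hrp]
      _ = -(τ ^ (-2 - 2 / ν)) * (c k * τ ^ (α k)) := by ring
  have hzero : f2 0 τ = 0 := by
    have hα0 : α 0 = (j : ℝ) := by simp [hα]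
    have h00 : α 0 * (α 0 - 1) = 0 := by rw [hα0]; exact hj01
    calc f2 0 τ = α 0 * (α 0 - 1) * (c 0 * τ ^ (α 0 - 2)) := by simp only [hf2]; ring
      _ = 0 := by rw [h00, zero_mul]
  have htail : ∑' k : ℕ, f2 k τ = -(τ ^ (-2 - 2 / ν)) * ∑' k : ℕ, c k * τ ^ (α k) := by
    rw [Summable.tsum_eq_zero_add hSf2, hzero, zero_add]
    calc ∑' k : ℕ, f2 (k + 1) τ = ∑' k : ℕ, -(τ ^ (-2 - 2 / ν)) * (c k * τ ^ (α k)) :=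
          tsum_congr hshift
      _ = _ := tsum_mul_left
  have final : deriv (deriv (fun t : ℝ => ∑' k : ℕ, c k * t ^ (α k))) τ
      + τ ^ (-2 - 2 / ν) * (∑' k : ℕ, c k * τ ^ (α k)) = 0 := by
    rw [hdd, htail]
    ring
  exact final
end
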